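/- Let G be a finite simple graph on a vertex set V, and let G* be the graph on V ∪ {r} (r a new vertex) whose edges are the edges of G together with an edge from r to every vertex of V. Let (T,r) be a DFS tree of G* rooted at r. Then for each child c of r, the restriction of T to the descendant set D_c of c is a DFS tree, rooted at c, of the induced subgraph of G on D_c (which is a connected component of G). -/

import Mathlib

open SimpleGraph

private lemma lift_walk {α β : Type*} {T : SimpleGraph β} {f : α → β}
    (hf : Function.Injective f) :
    ∀ {u v : β} (p : T.Walk u v) (x y : α), f x = u → f y = v →
      (∀ w ∈ p.support, w ∈ Set.range f) →
      ∃ q : (T.comap f).Walk x y, q.length = p.length := by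
  intro u v p
  induction p with
  | nil =>
    intro x y hx hy _
    cases hf (hx.trans hy.symm)
    exact ⟨.nil, rfl⟩
  | @cons a b w h p ih =>
    intro x y hx hy hsup
    obtain ⟨z, hz⟩ := hsup b (by simp)
    obtain ⟨q, hq⟩ := ih z y hz hy (fun w hw => hsup w (by simp [hw]))
    have hadj : (T.comap f).Adj x z := by rw [comap_adj, hx, hz]; exact h
    exact ⟨.cons hadj q, by simp [hq]⟩

private lemma isPath_length_eq_dist {β : Type*} [DecidableEq β] {T : SimpleGraph β} (ht : T.IsTree)
    {a b : β} (p : T.Walk a b) (hp : p.IsPath) : p.length = T.dist a b := by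
  obtain ⟨g, hg⟩ := ht.isConnected.exists_walk_length_eq_dist a b
  have h1 : g.bypass.IsPath := g.bypass_isPath
  have h2 : g.bypass.length = T.dist a b :=
    le_antisymm (hg ▸ g.length_bypass_le) (SimpleGraph.dist_le _)
  obtain ⟨P, _, hun⟩ := ht.existsUnique_path a b
  rw [(hun p hp).trans (hun g.bypass h1).symm]
  exact h2

private lemma dist_split {β : Type*} [DecidableEq β] {T : SimpleGraph β} (hconn : T.Connected) {a b w : β}
    (p : T.Walk a b) (hlen : p.length = T.dist a b) (hw : w ∈ p.support) :
    T.dist a w + T.dist w b = T.dist a b := by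
  have h1 := SimpleGraph.dist_le (p.takeUntil w hw)
  have h2 := SimpleGraph.dist_le (p.dropUntil w hw)
  have h3 : (p.takeUntil w hw).length + (p.dropUntil w hw).length = p.length := by
    rw [← SimpleGraph.Walk.length_append, p.take_spec hw]
  have h4 : T.dist a b ≤ T.dist a w + T.dist w b := hconn.dist_triangle
  omega


/-- `u` lies on the unique path in `T` from `r` to `v`
(characterized in a tree via distances). -/
def IsAncestor {V : Type*} (T : SimpleGraph V) (r u v : V) : Prop :=
  T.dist r u + T.dist u v = T.dist r v

/-- `u` and `v` are comparable in the rooted tree `(T, r)`. -/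
def TreeComparable {V : Type*} (T : SimpleGraph V) (r u v : V) : Prop :=
  IsAncestor T r u v ∨ IsAncestor T r v u

/-- `(T, r)` is a DFS tree of `G`. -/
def IsDFSTree {V : Type*} (G T : SimpleGraph V) (r : V) : Prop :=
  T ≤ G ∧ T.IsTree ∧ ∀ u v : V, G.Adj u v → TreeComparable T r u v

/-- `c` is a child of `r` in the rooted tree `(T, root)`. -/
def IsChild {V : Type*} (T : SimpleGraph V) (root r c : V) : Prop :=
  T.Adj r c ∧ IsAncestor T root r c ∧ r ≠ c

/-- The graph `G*` on `V ∪ {r}` (with `r = none` a new vertex) whose edges are the edges of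
`G` together with an edge from `r` to every vertex of `V`. -/
def addRoot {V : Type*} (G : SimpleGraph V) : SimpleGraph (Option V) where
  Adj x y :=
    match x, y with
    | some u, some v => G.Adj u v
    | some _, none => True
    | none, some _ => True
    | none, none => False
  symm := by
    constructor
    rintro (_ | u) (_ | v) h
    · exact h
    · trivial
    · trivial
    · exact G.adj_symm h
  loopless := by
    constructor
    rintro (_ | u) h
    · exact h
    · exact G.irrefl h

/-- For a DFS tree `(T, none)` of `G*` and a child `c` of the root, the restriction of `T` to
the descendant set `D_c` of `c` is a DFS tree, rooted at `c`, of the induced subgraph of `G`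
on `D_c`. -/
theorem stmt5 {V : Type*} [Fintype V] (G : SimpleGraph V)
    (T : SimpleGraph (Option V)) (h : IsDFSTree (addRoot G) T none)
    (c : V) (hc : IsChild T none none (some c)) :
    IsDFSTree (G.induce {v : V | IsAncestor T none (some c) (some v)})
      (T.comap (fun x : {v : V | IsAncestor T none (some c) (some v)} => some (x : V)))
      ⟨c, by simp [IsAncestor]⟩ := by
  classical
  obtain ⟨hle, htree, hback⟩ := h
  have hconn := htree.isConnected
  set S := {v : V | IsAncestor T none (some c) (some v)} with hS
  set f : ↑S → Option V := fun x => some (x : V) with hfdef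
  set T' := T.comap f with hT'
  have hfinj : Function.Injective f := fun a b hab => Subtype.ext (Option.some_injective _ hab)
  have d1 : T.dist none (some c) = 1 := SimpleGraph.dist_eq_one_iff_adj.mpr hc.1
  have hmem : ∀ v : V, v ∈ S ↔ 1 + T.dist (some c) (some v) = T.dist none (some v) := by
    intro v
    rw [hS]
    simp only [Set.mem_setOf_eq, IsAncestor, d1]
  have hcS : c ∈ S := by simp [hS, IsAncestor]
  -- every vertex on a geodesic from `some c` to a member of `S` is (the image of) a member of `S`
  have hclos : ∀ (v : V), v ∈ S → ∀ (p : T.Walk (some c) (some v)),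
      p.length = T.dist (some c) (some v) → ∀ w ∈ p.support, w ∈ Set.range f := by
    intro v hv p hlen w hw
    have hsplit := dist_split hconn p hlen hw
    have t1 : T.dist none w ≤ 1 + T.dist (some c) w := by
      have := hconn.dist_triangle (u := (none : Option V)) (v := some c) (w := w)
      omega
    have t2 : T.dist none (some v) ≤ T.dist none w + T.dist w (some v) :=
      hconn.dist_triangle
    have hv' := (hmem v).mp hv
    have hww : T.dist none w = 1 + T.dist (some c) w := by omega
    match w with
    | none =>
      exfalso
      rw [SimpleGraph.dist_self] at hww
      omega
    | some w' =>
      refine ⟨⟨w', ?_⟩, rfl⟩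
      show T.dist none (some c) + T.dist (some c) (some w') = T.dist none (some w')
      rw [d1]
      omega
  -- a walk between members of S staying inside the image of S, lifted to T'
  have hwalks : ∀ x y : ↑S, ∃ q : T'.Walk x y, q.length = T.dist (some ↑x) (some ↑y) := by
    intro x y
    obtain ⟨gx, hgx⟩ := hconn.exists_walk_length_eq_dist (some (c : V)) (some (x : V))
    obtain ⟨gy, hgy⟩ := hconn.exists_walk_length_eq_dist (some (c : V)) (some (y : V))
    set W : T.Walk (some (x : V)) (some (y : V)) := gx.reverse.append gy with hW
    have hsupW : ∀ w ∈ W.support, w ∈ Set.range f := by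
      intro w hw
      rw [hW, SimpleGraph.Walk.mem_support_append_iff] at hw
      rcases hw with hw | hw
      · rw [SimpleGraph.Walk.support_reverse, List.mem_reverse] at hw
        exact hclos x x.2 gx hgx w hw
      · exact hclos y y.2 gy hgy w hw
    have hP : W.bypass.IsPath := W.bypass_isPath
    have hPlen : W.bypass.length = T.dist (some (x : V)) (some (y : V)) :=
      isPath_length_eq_dist htree W.bypass hP
    have hsupP : ∀ w ∈ W.bypass.support, w ∈ Set.range f := fun w hw =>
      hsupW w (W.support_bypass_subset hw)
    obtain ⟨q, hq⟩ := lift_walk hfinj W.bypass x y rfl rfl hsupP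
    exact ⟨q, hq.trans hPlen⟩
  -- distances in T' agree with distances in T
  have hdist : ∀ x y : ↑S, T'.dist x y = T.dist (some ↑x) (some ↑y) := by
    intro x y
    obtain ⟨q, hq⟩ := hwalks x y
    refine le_antisymm (hq ▸ SimpleGraph.dist_le q) ?_
    obtain ⟨q', hq'⟩ := (SimpleGraph.Walk.reachable q).exists_walk_length_eq_dist
    have := SimpleGraph.dist_le (q'.map (SimpleGraph.Hom.comap f T))
    rwa [SimpleGraph.Walk.length_map, hq'] at this
  refine ⟨?_, ⟨?_, ?_⟩, ?_⟩
  · -- T' ≤ induced subgraph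
    intro a b hab
    exact hle hab
  · -- connected
    have hne : Nonempty ↑S := ⟨⟨c, hcS⟩⟩
    exact SimpleGraph.Connected.mk (fun x y => (hwalks x y).elim fun q _ => ⟨q⟩)
  · -- acyclic
    intro x p hp
    exact htree.IsAcyclic (p.map (SimpleGraph.Hom.comap f T)) (hp.map hfinj)
  · -- back edges
    rintro ⟨u, hu⟩ ⟨v, hv⟩ huv
    have hadj : (addRoot G).Adj (some u) (some v) := huv
    have hu' := (hmem u).mp hu
    have hv' := (hmem v).mp hv
    have hcomp := hback _ _ hadj
    have e1 : T'.dist ⟨c, hcS⟩ ⟨u, hu⟩ = T.dist (some c) (some u) := hdist _ _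
    have e2 : T'.dist ⟨u, hu⟩ ⟨v, hv⟩ = T.dist (some u) (some v) := hdist _ _
    have e3 : T'.dist ⟨c, hcS⟩ ⟨v, hv⟩ = T.dist (some c) (some v) := hdist _ _
    have e4 : T'.dist ⟨v, hv⟩ ⟨u, hu⟩ = T.dist (some v) (some u) := hdist _ _
    rcases hcomp with hanc | hanc
    · left
      show T'.dist ⟨c, hcS⟩ ⟨u, hu⟩ + T'.dist ⟨u, hu⟩ ⟨v, hv⟩ = T'.dist ⟨c, hcS⟩ ⟨v, hv⟩
      rw [e1, e2, e3]
      have hanc' : T.dist none (some u) + T.dist (some u) (some v) = T.dist none (some v) := hanc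
      have hco : T.dist (some u) (some v) = T.dist (some v) (some u) := SimpleGraph.dist_comm
      omega
    · right
      show T'.dist ⟨c, hcS⟩ ⟨v, hv⟩ + T'.dist ⟨v, hv⟩ ⟨u, hu⟩ = T'.dist ⟨c, hcS⟩ ⟨u, hu⟩
      rw [e3, e4, e1]
      have hanc' : T.dist none (some v) + T.dist (some v) (some u) = T.dist none (some u) := hanc
      omega
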